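/- Let α > 0, let c, b ∈ ℝ, and let A : ℕ → ℝ be a finitely supported family of coefficients. For each m ∈ ℕ define E_m := ((−1)^m/m!) · Σ_n A_n · h_{n+m}((b − c)/√α) (a finite sum). Then for every x ∈ ℝ, the series with m-th term E_m · ((x − b)/√α)^m converges and its sum equals Σ_n A_n · h_n((x − c)/√α). (This is the Multipole-to-Local (M2L) step of the Fast Gauss Transform: a truncated Hermite expansion about the source center c is converted into a Taylor expansion about the target center b.) -/

import Mathlib

open Real

/-- The Hermite function `h_n(t) = (−1)ⁿ · (dⁿ/dtⁿ) exp(−t²)`. -/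
noncomputable def hermiteFun (n : ℕ) (t : ℝ) : ℝ :=
  (-1) ^ n * iteratedDeriv n (fun s : ℝ => Real.exp (-s ^ 2)) t

noncomputable def gaussC : ℂ → ℂ := fun z => Complex.exp (-z ^ 2)

noncomputable def gaussR : ℝ → ℝ := fun s => Real.exp (-s ^ 2)

lemma gaussC_diff : Differentiable ℂ gaussC :=
  Complex.differentiable_exp.comp ((differentiable_pow 2).neg)

lemma gaussC_iter_diff (n : ℕ) : Differentiable ℂ (iteratedDeriv n gaussC) := by
  rw [iteratedDeriv_eq_iterate]
  exact ((gaussC_diff.contDiff (n := (⊤ : ℕ∞))).iterate_deriv n).differentiable (by simp)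

lemma gauss_real (n : ℕ) : ∀ x : ℝ,
    iteratedDeriv n gaussC (x : ℂ) = ((iteratedDeriv n gaussR x : ℝ) : ℂ) := by
  induction n with
  | zero =>
      intro x
      simp only [iteratedDeriv_zero, gaussC, gaussR]
      rw [Complex.ofReal_exp]
      push_cast
      ring_nf
  | succ n ih =>
      intro x
      set D := deriv (iteratedDeriv n gaussC) (x : ℂ) with hD
      have h1 : HasDerivAt (iteratedDeriv n gaussC) D (x : ℂ) :=
        (gaussC_iter_diff n (x : ℂ)).hasDerivAt
      have hg : HasDerivAt (iteratedDeriv n gaussR) D.re x := by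
        have h2 := h1.real_of_complex
        convert h2 using 1
        funext y
        rw [ih y, Complex.ofReal_re]
      have h3 : HasDerivAt (fun y : ℝ => ((iteratedDeriv n gaussR y : ℝ) : ℂ))
          ((D.re : ℝ) : ℂ) x := hg.ofReal_comp
      have h4 : HasDerivAt (fun y : ℝ => iteratedDeriv n gaussC (y : ℂ)) D x :=
        h1.comp_ofReal
      have h5 : HasDerivAt (fun y : ℝ => ((iteratedDeriv n gaussR y : ℝ) : ℂ)) D x := by
        convert h4 using 1
        funext y
        rw [ih y]
      have hDre : D = ((D.re : ℝ) : ℂ) := h5.unique h3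
      rw [iteratedDeriv_succ, iteratedDeriv_succ, ← hD, hg.deriv, hDre]; simp

lemma hermiteFun_eq (n : ℕ) (t : ℝ) :
    iteratedDeriv n gaussR t = (-1) ^ n * hermiteFun n t := by
  rw [hermiteFun, ← mul_assoc, ← pow_add]
  rw [show n + n = 2 * n by ring, pow_mul]
  norm_num
  rfl

lemma iter_iter (n m : ℕ) :
    iteratedDeriv m (iteratedDeriv n gaussC) = iteratedDeriv (n + m) gaussC := by
  induction m with
  | zero => simp
  | succ m ih => rw [iteratedDeriv_succ, ih, show n + (m + 1) = (n + m) + 1 from rfl, iteratedDeriv_succ]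

lemma key (n : ℕ) (t₀ u : ℝ) :
    HasSum (fun m : ℕ => ((-1 : ℝ) ^ m / m.factorial) * hermiteFun (n + m) t₀ * u ^ m)
      (hermiteFun n (t₀ + u)) := by
  have H := Complex.hasSum_taylorSeries_of_entire (gaussC_iter_diff n) (t₀ : ℂ) ((t₀ + u : ℝ) : ℂ)
  have H2 : HasSum (fun m : ℕ => (((m.factorial : ℝ)⁻¹ * u ^ m * iteratedDeriv (n + m) gaussR t₀ : ℝ) : ℂ))
      (((iteratedDeriv n gaussR (t₀ + u) : ℝ) : ℂ)) := by
    convert H using 2 with m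
    · rfl
    · rw [iter_iter, gauss_real]
      push_cast
      simp only [smul_eq_mul]
      ring
    · rw [gauss_real]
  rw [Complex.hasSum_ofReal] at H2
  have H3 := H2.mul_left ((-1 : ℝ) ^ n)
  rw [hermiteFun_eq n (t₀ + u), ← mul_assoc, ← pow_add,
    show n + n = 2 * n by ring, pow_mul] at H3
  norm_num at H3
  convert H3 using 2 with m
  rfl
  rw [hermiteFun_eq]
  rw [show ((-1:ℝ))^n * ((m.factorial:ℝ)⁻¹ * u^m * ((-1)^(n+m) * hermiteFun (n+m) t₀)) =
    ((-1)^n * (-1)^(n+m)) * ((m.factorial:ℝ)⁻¹ * u^m * hermiteFun (n+m) t₀) by ring]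
  rw [← pow_add, show n + (n+m) = 2*n + m by ring, pow_add, pow_mul]
  norm_num
  ring

/-- **M2L step of the Fast Gauss Transform.**
Given finitely supported coefficients `A : ℕ →₀ ℝ` and
`E_m := ((−1)^m/m!)·Σ_n A_n·h_{n+m}((b−c)/√α)` (a finite sum), for every `x` the
series with `m`-th term `E_m·((x−b)/√α)^m` converges with sum
`Σ_n A_n·h_n((x−c)/√α)`. -/
theorem fgt_m2l (α : ℝ) (hα : 0 < α) (c b : ℝ) (A : ℕ →₀ ℝ) (E : ℕ → ℝ)
    (hE : ∀ m, E m = ((-1) ^ m / (m.factorial : ℝ)) *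
        ∑ n ∈ A.support, A n * hermiteFun (n + m) ((b - c) / Real.sqrt α)) :
    ∀ x : ℝ,
      HasSum (fun m : ℕ => E m * ((x - b) / Real.sqrt α) ^ m)
        (∑ n ∈ A.support, A n * hermiteFun n ((x - c) / Real.sqrt α)) := by
  intro x
  set t₀ := (b - c) / Real.sqrt α with ht₀
  set r := (x - b) / Real.sqrt α with hr
  have hs : (x - c) / Real.sqrt α = t₀ + r := by
    rw [ht₀, hr, ← add_div]
    ring_nf
  have h := hasSum_sum (s := A.support)
    (f := fun n m => A n * (((-1 : ℝ) ^ m / m.factorial) * hermiteFun (n + m) t₀ * r ^ m))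
    (a := fun n => A n * hermiteFun n (t₀ + r)) (fun n _ => (key n t₀ r).mul_left (A n))
  rw [hs]
  convert h using 2 with m
  rw [hE m, Finset.mul_sum, Finset.sum_mul]
  exact Finset.sum_congr rfl fun n _ => by ring
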